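/- arXiv:2302.04088 — 2 statements merged into one kernel-verified Lean document; each statement's English description precedes it below -/
import Mathlib

section
/- (Theorem 1, gyrotranslation part, gyrometric form.) For every c > 0 and all u, x, y ∈ E with c·‖u‖² < 1, c·‖x‖² < 1, c·‖y‖² < 1, one has ‖(−(u ⊕_c x)) ⊕_c (u ⊕_c y)‖ = ‖(−x) ⊕_c y‖. -/
open scoped RealInnerProductSpace

set_option linter.unusedSectionVars false

variable {E : Type*} [NormedAddCommGroup E] [InnerProductSpace ℝ E] [FiniteDimensional ℝ E]

/-- Möbius addition on the Poincaré ball of curvature `-c`. -/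
noncomputable def mobiusAdd (c : ℝ) (x y : E) : E :=
  (1 / (1 + 2 * c * ⟪x, y⟫ + c ^ 2 * ‖x‖ ^ 2 * ‖y‖ ^ 2)) •
    ((1 + 2 * c * ⟪x, y⟫ + c * ‖y‖ ^ 2) • x + (1 - c * ‖x‖ ^ 2) • y)

lemma denom_pos (c : ℝ) (hc : 0 < c) (x y : E) (hx : c * ‖x‖ ^ 2 < 1) (hy : c * ‖y‖ ^ 2 < 1) :
    0 < 1 + 2 * c * ⟪x, y⟫ + c ^ 2 * ‖x‖ ^ 2 * ‖y‖ ^ 2 := by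
  have h1 := abs_real_inner_le_norm x y
  have h2 := abs_le.mp h1
  nlinarith [sq_nonneg (1 - c * ‖x‖ * ‖y‖), norm_nonneg x, norm_nonneg y,
    mul_pos hc hc, sq_nonneg (‖x‖ - ‖y‖), sq_nonneg (‖x‖ + ‖y‖)]

lemma norm_sq_mobiusAdd (c : ℝ) (x y : E)
    (hD : 1 + 2 * c * ⟪x, y⟫ + c ^ 2 * ‖x‖ ^ 2 * ‖y‖ ^ 2 ≠ 0) :
    ‖mobiusAdd c x y‖ ^ 2 = ‖x + y‖ ^ 2 / (1 + 2 * c * ⟪x, y⟫ + c ^ 2 * ‖x‖ ^ 2 * ‖y‖ ^ 2) := by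
  have hv : ∀ p q : ℝ, ‖p • x + q • y‖ ^ 2
      = p ^ 2 * ‖x‖ ^ 2 + 2 * (p * q * ⟪x, y⟫) + q ^ 2 * ‖y‖ ^ 2 := by
    intro p q
    rw [norm_add_sq_real, norm_smul, norm_smul, real_inner_smul_left, real_inner_smul_right]
    simp [Real.norm_eq_abs, mul_pow, sq_abs]
    ring
  rw [mobiusAdd, norm_smul, mul_pow, hv, norm_add_sq_real]
  simp only [Real.norm_eq_abs, sq_abs, one_div]
  field_simp
  ring

lemma mobiusAdd_mem (c : ℝ) (hc : 0 < c) (x y : E) (hx : c * ‖x‖ ^ 2 < 1)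
    (hy : c * ‖y‖ ^ 2 < 1) : c * ‖mobiusAdd c x y‖ ^ 2 < 1 := by
  have hD := denom_pos c hc x y hx hy
  have h2 := norm_sq_mobiusAdd c x y hD.ne'
  have hxy : ‖x + y‖ ^ 2 = ‖x‖ ^ 2 + 2 * ⟪x, y⟫ + ‖y‖ ^ 2 := norm_add_sq_real x y
  have key : c * ‖mobiusAdd c x y‖ ^ 2 * (1 + 2 * c * ⟪x, y⟫ + c ^ 2 * ‖x‖ ^ 2 * ‖y‖ ^ 2)
      < 1 * (1 + 2 * c * ⟪x, y⟫ + c ^ 2 * ‖x‖ ^ 2 * ‖y‖ ^ 2) := by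
    rw [h2]
    have : c * (‖x + y‖ ^ 2 / (1 + 2 * c * ⟪x, y⟫ + c ^ 2 * ‖x‖ ^ 2 * ‖y‖ ^ 2))
        * (1 + 2 * c * ⟪x, y⟫ + c ^ 2 * ‖x‖ ^ 2 * ‖y‖ ^ 2) = c * ‖x + y‖ ^ 2 := by
      rw [mul_assoc, div_mul_cancel₀ _ hD.ne']
    rw [this]
    nlinarith [mul_pos (by linarith : (0:ℝ) < 1 - c * ‖x‖ ^ 2)
      (by linarith : (0:ℝ) < 1 - c * ‖y‖ ^ 2)]
  exact lt_of_mul_lt_mul_right (by linarith) hD.le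

theorem gyrotranslation_gyrometric (c : ℝ) (hc : 0 < c) (u x y : E)
    (hu : c * ‖u‖ ^ 2 < 1) (hx : c * ‖x‖ ^ 2 < 1) (hy : c * ‖y‖ ^ 2 < 1) :
    ‖mobiusAdd c (-(mobiusAdd c u x)) (mobiusAdd c u y)‖ = ‖mobiusAdd c (-x) y‖ := by
  set a := mobiusAdd c u x with ha_def
  set b := mobiusAdd c u y with hb_def
  have ha : c * ‖a‖ ^ 2 < 1 := mobiusAdd_mem c hc u x hu hx
  have hb : c * ‖b‖ ^ 2 < 1 := mobiusAdd_mem c hc u y hu hy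
  have hD1 : 0 < 1 + 2 * c * ⟪-a, b⟫ + c ^ 2 * ‖-a‖ ^ 2 * ‖b‖ ^ 2 :=
    denom_pos c hc (-a) b (by simpa using ha) hb
  have hD2 : 0 < 1 + 2 * c * ⟪-x, y⟫ + c ^ 2 * ‖-x‖ ^ 2 * ‖y‖ ^ 2 :=
    denom_pos c hc (-x) y (by simpa using hx) hy
  have hDux : 0 < 1 + 2 * c * ⟪u, x⟫ + c ^ 2 * ‖u‖ ^ 2 * ‖x‖ ^ 2 := denom_pos c hc u x hu hx
  have hDuy : 0 < 1 + 2 * c * ⟪u, y⟫ + c ^ 2 * ‖u‖ ^ 2 * ‖y‖ ^ 2 := denom_pos c hc u y hu hy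
  -- reduce to squares
  rw [← Real.sqrt_sq (norm_nonneg (mobiusAdd c (-a) b)),
      ← Real.sqrt_sq (norm_nonneg (mobiusAdd c (-x) y))]
  congr 1
  rw [norm_sq_mobiusAdd c (-a) b hD1.ne', norm_sq_mobiusAdd c (-x) y hD2.ne',
      div_eq_div_iff hD1.ne' hD2.ne']
  -- scalar expressions
  have hna : ‖a‖ ^ 2 = (‖u‖ ^ 2 + 2 * ⟪u, x⟫ + ‖x‖ ^ 2)
      / (1 + 2 * c * ⟪u, x⟫ + c ^ 2 * ‖u‖ ^ 2 * ‖x‖ ^ 2) := by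
    rw [ha_def, norm_sq_mobiusAdd c u x hDux.ne', norm_add_sq_real]
  have hnb : ‖b‖ ^ 2 = (‖u‖ ^ 2 + 2 * ⟪u, y⟫ + ‖y‖ ^ 2)
      / (1 + 2 * c * ⟪u, y⟫ + c ^ 2 * ‖u‖ ^ 2 * ‖y‖ ^ 2) := by
    rw [hb_def, norm_sq_mobiusAdd c u y hDuy.ne', norm_add_sq_real]
  have hab : ⟪a, b⟫ =
      ((1 + 2 * c * ⟪u, x⟫ + c * ‖x‖ ^ 2) * (1 + 2 * c * ⟪u, y⟫ + c * ‖y‖ ^ 2) * ‖u‖ ^ 2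
        + (1 + 2 * c * ⟪u, x⟫ + c * ‖x‖ ^ 2) * (1 - c * ‖u‖ ^ 2) * ⟪u, y⟫
        + (1 - c * ‖u‖ ^ 2) * (1 + 2 * c * ⟪u, y⟫ + c * ‖y‖ ^ 2) * ⟪u, x⟫
        + (1 - c * ‖u‖ ^ 2) * (1 - c * ‖u‖ ^ 2) * ⟪x, y⟫)
      / ((1 + 2 * c * ⟪u, x⟫ + c ^ 2 * ‖u‖ ^ 2 * ‖x‖ ^ 2)
        * (1 + 2 * c * ⟪u, y⟫ + c ^ 2 * ‖u‖ ^ 2 * ‖y‖ ^ 2)) := by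
    rw [ha_def, hb_def]
    simp only [mobiusAdd, inner_add_left, inner_add_right, real_inner_smul_left,
      real_inner_smul_right, real_inner_self_eq_norm_sq, real_inner_comm x u]
    field_simp
    ring
  have hnab : ‖-a + b‖ ^ 2 = ‖b‖ ^ 2 - 2 * ⟪b, a⟫ + ‖a‖ ^ 2 := by
    rw [neg_add_eq_sub, norm_sub_sq_real]
  have hnxy : ‖-x + y‖ ^ 2 = ‖y‖ ^ 2 - 2 * ⟪y, x⟫ + ‖x‖ ^ 2 := by
    rw [neg_add_eq_sub, norm_sub_sq_real]
  rw [hnab, hnxy, real_inner_comm a b, real_inner_comm x y]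
  simp only [inner_neg_left, norm_neg]
  rw [hna, hnb, hab]
  generalize hX : (1 + 2 * c * ⟪u, x⟫ + c ^ 2 * ‖u‖ ^ 2 * ‖x‖ ^ 2) = X at hDux ⊢
  generalize hY : (1 + 2 * c * ⟪u, y⟫ + c ^ 2 * ‖u‖ ^ 2 * ‖y‖ ^ 2) = Y at hDuy ⊢
  field_simp
  subst hX hY
  ring
end

section
/- (Theorem 1, converse direction.) Let c > 0 and let R : E → E be a map which sends the Poincaré ball B_c into B_c, is surjective onto B_c, and preserves the hyperbolic distance: d_c(R x, R y) = d_c(x, y) for all x, y ∈ B_c. Then there exist b ∈ E with c·‖b‖² < 1 and a linear isometry W : E → E such that R x = b ⊕_c (W x) for all x ∈ B_c; i.e. every isometry of (B_c, d_c) is the composite of a left gyrotranslation and an orthogonal transformation. -/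
open scoped RealInnerProductSpace

variable {E : Type*} [NormedAddCommGroup E] [InnerProductSpace ℝ E] [FiniteDimensional ℝ E]

/-- Inverse hyperbolic tangent. -/
noncomputable def artanh (t : ℝ) : ℝ := (1 / 2) * Real.log ((1 + t) / (1 - t))

/-- Hyperbolic distance on the Poincaré ball of curvature `-c`. -/
noncomputable def hypDist (c : ℝ) (x y : E) : ℝ :=
  (2 / Real.sqrt c) * artanh (Real.sqrt c * ‖mobiusAdd c (-x) y‖)

lemma den_pos {c : ℝ} (hc : 0 < c) {x y : E} (hx : c * ‖x‖ ^ 2 < 1) (hy : c * ‖y‖ ^ 2 < 1) :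
    0 < 1 + 2 * c * ⟪x, y⟫ + c ^ 2 * ‖x‖ ^ 2 * ‖y‖ ^ 2 := by
  have h1 := abs_real_inner_le_norm x y
  have h2 := abs_le.mp h1
  have h4 : (c * ‖x‖ ^ 2) * (c * ‖y‖ ^ 2) < 1 := by
    nlinarith [mul_nonneg hc.le (sq_nonneg ‖x‖), mul_nonneg hc.le (sq_nonneg ‖y‖)]
  have h3 : c * (‖x‖ * ‖y‖) < 1 := by
    nlinarith [h4, mul_nonneg (mul_nonneg hc.le (norm_nonneg x)) (norm_nonneg y)]
  nlinarith [sq_nonneg (1 - c * (‖x‖ * ‖y‖)), norm_nonneg x, norm_nonneg y]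

lemma combo_norm_sq (α β : ℝ) (a x : E) :
    ‖α • a + β • x‖ ^ 2 = α ^ 2 * ‖a‖ ^ 2 + 2 * (α * β) * ⟪a, x⟫ + β ^ 2 * ‖x‖ ^ 2 := by
  rw [← real_inner_self_eq_norm_sq]
  simp only [inner_add_left, inner_add_right, real_inner_smul_left, real_inner_smul_right]
  simp only [real_inner_self_eq_norm_sq]
  rw [real_inner_comm x a]; ring

lemma normSq_mobiusAdd {c : ℝ} {a x : E}
    (hD : 1 + 2 * c * ⟪a, x⟫ + c ^ 2 * ‖a‖ ^ 2 * ‖x‖ ^ 2 ≠ 0) :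
    (1 - c * ‖mobiusAdd c a x‖ ^ 2) * (1 + 2 * c * ⟪a, x⟫ + c ^ 2 * ‖a‖ ^ 2 * ‖x‖ ^ 2) =
      (1 - c * ‖a‖ ^ 2) * (1 - c * ‖x‖ ^ 2) := by
  have h : ‖mobiusAdd c a x‖ ^ 2 =
      (1 / (1 + 2 * c * ⟪a, x⟫ + c ^ 2 * ‖a‖ ^ 2 * ‖x‖ ^ 2)) ^ 2 *
        ((1 + 2 * c * ⟪a, x⟫ + c * ‖x‖ ^ 2) ^ 2 * ‖a‖ ^ 2 +
          2 * ((1 + 2 * c * ⟪a, x⟫ + c * ‖x‖ ^ 2) * (1 - c * ‖a‖ ^ 2)) * ⟪a, x⟫ +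
          (1 - c * ‖a‖ ^ 2) ^ 2 * ‖x‖ ^ 2) := by
    rw [mobiusAdd, norm_smul, mul_pow, ← combo_norm_sq]
    simp [sq_abs]
  set D := 1 + 2 * c * ⟪a, x⟫ + c ^ 2 * ‖a‖ ^ 2 * ‖x‖ ^ 2 with hDD
  rw [h]; field_simp; rw [hDD]; ring

lemma mobiusAdd_zero_left {c : ℝ} (y : E) : mobiusAdd c (0 : E) y = y := by
  simp [mobiusAdd]

lemma mobiusAdd_neg_self {c : ℝ} (a : E) : mobiusAdd c (-a) a = 0 := by
  rw [mobiusAdd]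
  simp only [inner_neg_left, real_inner_self_eq_norm_sq, norm_neg]
  match_scalars <;> ring

lemma three_combo_norm_sq (A B C : ℝ) (a x y : E) :
    ‖A • a + B • x + C • y‖ ^ 2 =
      A ^ 2 * ‖a‖ ^ 2 + B ^ 2 * ‖x‖ ^ 2 + C ^ 2 * ‖y‖ ^ 2 +
        2 * (A * B) * ⟪a, x⟫ + 2 * (A * C) * ⟪a, y⟫ + 2 * (B * C) * ⟪x, y⟫ := by
  rw [← real_inner_self_eq_norm_sq]
  simp only [inner_add_left, inner_add_right, real_inner_smul_left, real_inner_smul_right]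
  simp only [real_inner_self_eq_norm_sq]
  rw [real_inner_comm x a, real_inner_comm y a, real_inner_comm y x]; ring

set_option maxHeartbeats 1000000 in
set_option maxRecDepth 10000 in
lemma dist_mobiusAdd {c : ℝ} {a x y : E}
    (hDx : 1 + 2 * c * ⟪a, x⟫ + c ^ 2 * ‖a‖ ^ 2 * ‖x‖ ^ 2 ≠ 0)
    (hDy : 1 + 2 * c * ⟪a, y⟫ + c ^ 2 * ‖a‖ ^ 2 * ‖y‖ ^ 2 ≠ 0) :
    ‖mobiusAdd c a x - mobiusAdd c a y‖ ^ 2 *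
      ((1 + 2 * c * ⟪a, x⟫ + c ^ 2 * ‖a‖ ^ 2 * ‖x‖ ^ 2) *
        (1 + 2 * c * ⟪a, y⟫ + c ^ 2 * ‖a‖ ^ 2 * ‖y‖ ^ 2)) =
      (1 - c * ‖a‖ ^ 2) ^ 2 * ‖x - y‖ ^ 2 := by
  set Dx := 1 + 2 * c * ⟪a, x⟫ + c ^ 2 * ‖a‖ ^ 2 * ‖x‖ ^ 2 with hDx'
  set Dy := 1 + 2 * c * ⟪a, y⟫ + c ^ 2 * ‖a‖ ^ 2 * ‖y‖ ^ 2 with hDy'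
  have hw : (Dx * Dy) • (mobiusAdd c a x - mobiusAdd c a y) =
      ((1 + 2 * c * ⟪a, x⟫ + c * ‖x‖ ^ 2) * Dy - (1 + 2 * c * ⟪a, y⟫ + c * ‖y‖ ^ 2) * Dx) • a +
        ((1 - c * ‖a‖ ^ 2) * Dy) • x + (-((1 - c * ‖a‖ ^ 2) * Dx)) • y := by
    rw [mobiusAdd, mobiusAdd, ← hDx', ← hDy']
    match_scalars <;> field_simp <;> ring
  have h1 : ‖(Dx * Dy) • (mobiusAdd c a x - mobiusAdd c a y)‖ ^ 2 =
      (Dx * Dy) ^ 2 * ‖mobiusAdd c a x - mobiusAdd c a y‖ ^ 2 := by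
    rw [norm_smul, mul_pow, Real.norm_eq_abs, sq_abs]
  have h2 := congrArg (fun w : E => ‖w‖ ^ 2) hw
  rw [h1, three_combo_norm_sq] at h2
  have hne : Dx * Dy ≠ 0 := mul_ne_zero hDx hDy
  have goal' : ‖mobiusAdd c a x - mobiusAdd c a y‖ ^ 2 * (Dx * Dy) * (Dx * Dy) =
      (1 - c * ‖a‖ ^ 2) ^ 2 * ‖x - y‖ ^ 2 * (Dx * Dy) := by
    rw [norm_sub_sq_real x y]
    rw [hDx', hDy'] at h2 ⊢
    linear_combination h2
  exact mul_right_cancel₀ hne goal'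

lemma ball_mobiusAdd {c : ℝ} (hc : 0 < c) {a x : E} (ha : c * ‖a‖ ^ 2 < 1)
    (hx : c * ‖x‖ ^ 2 < 1) : c * ‖mobiusAdd c a x‖ ^ 2 < 1 := by
  have hD := den_pos hc ha hx
  have h := normSq_mobiusAdd (a := a) (x := x) (c := c) hD.ne'
  nlinarith [mul_pos (sub_pos.2 ha) (sub_pos.2 hx)]

set_option maxHeartbeats 1000000 in
set_option maxRecDepth 10000 in
lemma mobiusAdd_cancel {c : ℝ} (hc : 0 < c) {a z : E} (ha : c * ‖a‖ ^ 2 < 1)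
    (hz : c * ‖z‖ ^ 2 < 1) : mobiusAdd c (-a) (mobiusAdd c a z) = z := by
  set v := mobiusAdd c a z with hv
  set D := 1 + 2 * c * ⟪a, z⟫ + c ^ 2 * ‖a‖ ^ 2 * ‖z‖ ^ 2 with hD'
  have hD : 0 < D := den_pos hc ha hz
  have hβ : (1 : ℝ) - c * ‖a‖ ^ 2 ≠ 0 := by nlinarith
  have hvrep : v = (1 / D) • ((1 + 2 * c * ⟪a, z⟫ + c * ‖z‖ ^ 2) • a + (1 - c * ‖a‖ ^ 2) • z) :=
    rfl
  have hav : ⟪a, v⟫ = ((1 + 2 * c * ⟪a, z⟫ + c * ‖z‖ ^ 2) * ‖a‖ ^ 2 +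
      (1 - c * ‖a‖ ^ 2) * ⟪a, z⟫) / D := by
    rw [hvrep]
    simp only [inner_add_right, real_inner_smul_right, real_inner_self_eq_norm_sq]
    field_simp
  have hnv : ‖v‖ ^ 2 = ((1 + 2 * c * ⟪a, z⟫ + c * ‖z‖ ^ 2) ^ 2 * ‖a‖ ^ 2 +
      2 * ((1 + 2 * c * ⟪a, z⟫ + c * ‖z‖ ^ 2) * (1 - c * ‖a‖ ^ 2)) * ⟪a, z⟫ +
      (1 - c * ‖a‖ ^ 2) ^ 2 * ‖z‖ ^ 2) / D ^ 2 := by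
    rw [hvrep, norm_smul, mul_pow, combo_norm_sq, Real.norm_eq_abs, sq_abs]
    field_simp
  have hXval : 1 + 2 * c * ⟪-a, v⟫ + c ^ 2 * ‖-a‖ ^ 2 * ‖v‖ ^ 2 = (1 - c * ‖a‖ ^ 2) ^ 2 / D := by
    rw [inner_neg_left, norm_neg, hav, hnv]
    field_simp [hD.ne']
    rw [hD']
    ring
  rw [mobiusAdd, hXval]
  simp only [inner_neg_left, norm_neg]
  rw [hav, hnv, hvrep]
  match_scalars <;> field_simp <;> ring


lemma artanh_inj {s t : ℝ} (hs0 : 0 ≤ s) (hs1 : s < 1) (ht0 : 0 ≤ t) (ht1 : t < 1)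
    (h : artanh s = artanh t) : s = t := by
  have h1 : (0:ℝ) < 1 - s := by linarith
  have h2 : (0:ℝ) < 1 - t := by linarith
  have h3 : (0:ℝ) < 1 + s := by linarith
  have h4 : (0:ℝ) < 1 + t := by linarith
  have h5 : (1 + s) / (1 - s) = (1 + t) / (1 - t) := by
    have e := congrArg (fun r => Real.exp (2 * r)) h
    simp only [artanh] at e
    rwa [show 2 * (1 / 2 * Real.log ((1 + s) / (1 - s))) = Real.log ((1 + s) / (1 - s)) by ring,
      show 2 * (1 / 2 * Real.log ((1 + t) / (1 - t))) = Real.log ((1 + t) / (1 - t)) by ring,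
      Real.exp_log (div_pos h3 h1), Real.exp_log (div_pos h4 h2)] at e
  field_simp at h5
  linarith

lemma normSq_mobiusAdd_neg {c : ℝ} {x y : E}
    (hD : 1 + 2 * c * ⟪-x, y⟫ + c ^ 2 * ‖-x‖ ^ 2 * ‖y‖ ^ 2 ≠ 0) :
    ‖mobiusAdd c (-x) y‖ ^ 2 * (1 + 2 * c * ⟪-x, y⟫ + c ^ 2 * ‖-x‖ ^ 2 * ‖y‖ ^ 2) =
      ‖x - y‖ ^ 2 := by
  have hw : (1 + 2 * c * ⟪-x, y⟫ + c ^ 2 * ‖-x‖ ^ 2 * ‖y‖ ^ 2) • mobiusAdd c (-x) y =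
      (1 + 2 * c * ⟪-x, y⟫ + c * ‖y‖ ^ 2) • (-x) + (1 - c * ‖-x‖ ^ 2) • y := by
    have hD2 : 1 + -(2 * c * ⟪x, y⟫) + c ^ 2 * ‖x‖ ^ 2 * ‖y‖ ^ 2 ≠ 0 := by
      intro h; apply hD; simp only [inner_neg_left, norm_neg]; linarith
    rw [mobiusAdd]
    match_scalars <;> field_simp [hD2]
  have h2 := congrArg (fun w : E => ‖w‖ ^ 2) hw
  rw [norm_smul, mul_pow, Real.norm_eq_abs, sq_abs, combo_norm_sq] at h2
  have goal' : ‖mobiusAdd c (-x) y‖ ^ 2 * (1 + 2 * c * ⟪-x, y⟫ + c ^ 2 * ‖-x‖ ^ 2 * ‖y‖ ^ 2) *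
      (1 + 2 * c * ⟪-x, y⟫ + c ^ 2 * ‖-x‖ ^ 2 * ‖y‖ ^ 2) =
      ‖x - y‖ ^ 2 * (1 + 2 * c * ⟪-x, y⟫ + c ^ 2 * ‖-x‖ ^ 2 * ‖y‖ ^ 2) := by
    rw [norm_sub_sq_real x y]
    simp only [inner_neg_left, norm_neg] at h2 ⊢
    linear_combination h2
  exact mul_right_cancel₀ hD goal'

lemma trans_inv {c : ℝ} (hc : 0 < c) {a u v : E} (ha : c * ‖a‖ ^ 2 < 1)
    (hu : c * ‖u‖ ^ 2 < 1) (hv : c * ‖v‖ ^ 2 < 1) :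
    ‖mobiusAdd c a u - mobiusAdd c a v‖ ^ 2 * ((1 - c * ‖u‖ ^ 2) * (1 - c * ‖v‖ ^ 2)) =
      ‖u - v‖ ^ 2 * ((1 - c * ‖mobiusAdd c a u‖ ^ 2) * (1 - c * ‖mobiusAdd c a v‖ ^ 2)) := by
  have hDu := den_pos hc ha hu
  have hDv := den_pos hc ha hv
  have d2 := dist_mobiusAdd hDu.ne' hDv.ne'
  have nu := normSq_mobiusAdd (a := a) (x := u) hDu.ne'
  have nv := normSq_mobiusAdd (a := a) (x := v) hDv.ne'
  refine mul_right_cancel₀ (mul_ne_zero hDu.ne' hDv.ne') ?_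
  linear_combination ((1 - c * ‖u‖ ^ 2) * (1 - c * ‖v‖ ^ 2)) * d2
    - (‖u - v‖ ^ 2 * ((1 - c * ‖a‖ ^ 2) * (1 - c * ‖u‖ ^ 2))) * nv
    - (‖u - v‖ ^ 2 * ((1 - c * ‖mobiusAdd c a v‖ ^ 2) *
        (1 + 2 * c * ⟪a, v⟫ + c ^ 2 * ‖a‖ ^ 2 * ‖v‖ ^ 2))) * nu


set_option maxHeartbeats 1000000 in
theorem isometry_decomposition (c : ℝ) (hc : 0 < c) (R : E → E)
    (hmaps : ∀ x : E, c * ‖x‖ ^ 2 < 1 → c * ‖R x‖ ^ 2 < 1)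
    (hsurj : ∀ y : E, c * ‖y‖ ^ 2 < 1 → ∃ x : E, c * ‖x‖ ^ 2 < 1 ∧ R x = y)
    (hiso : ∀ x y : E, c * ‖x‖ ^ 2 < 1 → c * ‖y‖ ^ 2 < 1 →
      hypDist c (R x) (R y) = hypDist c x y) :
    ∃ b : E, c * ‖b‖ ^ 2 < 1 ∧ ∃ W : E →ₗᵢ[ℝ] E,
      ∀ x : E, c * ‖x‖ ^ 2 < 1 → R x = mobiusAdd c b (W x) := by
  have hs : 0 < Real.sqrt c := Real.sqrt_pos.2 hc
  have h0 : c * ‖(0 : E)‖ ^ 2 < 1 := by simp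
  have hb : c * ‖R 0‖ ^ 2 < 1 := hmaps 0 h0
  have hnb : c * ‖-(R 0)‖ ^ 2 < 1 := by rwa [norm_neg]
  -- Step 1: R preserves the Möbius gyrodistance norm
  have key : ∀ x y : E, c * ‖x‖ ^ 2 < 1 → c * ‖y‖ ^ 2 < 1 →
      ‖mobiusAdd c (-(R x)) (R y)‖ = ‖mobiusAdd c (-x) y‖ := by
    intro x y hx hy
    have hb1 : c * ‖mobiusAdd c (-x) y‖ ^ 2 < 1 :=
      ball_mobiusAdd hc (by rwa [norm_neg]) hy
    have hb2 : c * ‖mobiusAdd c (-(R x)) (R y)‖ ^ 2 < 1 :=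
      ball_mobiusAdd hc (by rw [norm_neg]; exact hmaps x hx) (hmaps y hy)
    have h := hiso x y hx hy
    unfold hypDist at h
    have hne : (2 / Real.sqrt c) ≠ 0 := by positivity
    have h2 := mul_left_cancel₀ hne h
    have lt1 : ∀ m : ℝ, 0 ≤ m → c * m ^ 2 < 1 → Real.sqrt c * m < 1 := by
      intro m hm hlt
      by_contra hcon
      push_neg at hcon
      have h3 : (1:ℝ) ≤ (Real.sqrt c * m) ^ 2 := by nlinarith
      rw [mul_pow, Real.sq_sqrt hc.le] at h3
      linarith
    have h4 := artanh_inj (mul_nonneg hs.le (norm_nonneg _)) (lt1 _ (norm_nonneg _) hb2)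
      (mul_nonneg hs.le (norm_nonneg _)) (lt1 _ (norm_nonneg _) hb1) h2
    exact mul_left_cancel₀ hs.ne' h4
  -- Step 2: the fundamental invariant
  have star : ∀ x y : E, c * ‖x‖ ^ 2 < 1 → c * ‖y‖ ^ 2 < 1 →
      ‖R x - R y‖ ^ 2 * ((1 - c * ‖x‖ ^ 2) * (1 - c * ‖y‖ ^ 2)) =
        ‖x - y‖ ^ 2 * ((1 - c * ‖R x‖ ^ 2) * (1 - c * ‖R y‖ ^ 2)) := by
    intro x y hx hy
    have hxn : c * ‖-x‖ ^ 2 < 1 := by rwa [norm_neg]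
    have hRxn : c * ‖-(R x)‖ ^ 2 < 1 := by rw [norm_neg]; exact hmaps x hx
    have hD := den_pos hc hxn hy
    have hD' := den_pos hc hRxn (hmaps y hy)
    have e1 := normSq_mobiusAdd_neg (x := x) (y := y) hD.ne'
    have n1 := normSq_mobiusAdd (a := -x) (x := y) hD.ne'
    have e3 := normSq_mobiusAdd_neg (x := R x) (y := R y) hD'.ne'
    have n3 := normSq_mobiusAdd (a := -(R x)) (x := R y) hD'.ne'
    have hk := key x y hx hy
    rw [hk] at e3 n3
    simp only [norm_neg, inner_neg_left] at e1 n1 e3 n3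
    linear_combination ((1 - c * ‖R x‖ ^ 2) * (1 - c * ‖R y‖ ^ 2)) * e1
      - (‖mobiusAdd c (-x) y‖ ^ 2 *
          (1 - 2 * c * ⟪R x, R y⟫ + c ^ 2 * ‖R x‖ ^ 2 * ‖R y‖ ^ 2)) * n1
      - ((1 - c * ‖x‖ ^ 2) * (1 - c * ‖y‖ ^ 2)) * e3
      + (‖mobiusAdd c (-x) y‖ ^ 2 *
          (1 - 2 * c * ⟪x, y⟫ + c ^ 2 * ‖x‖ ^ 2 * ‖y‖ ^ 2)) * n3
  -- Step 3: the recentered map S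
  set S : E → E := fun y => mobiusAdd c (-(R 0)) (R y) with hS
  have hSball : ∀ x : E, c * ‖x‖ ^ 2 < 1 → c * ‖S x‖ ^ 2 < 1 := by
    intro x hx
    simp only [hS]
    exact ball_mobiusAdd hc hnb (hmaps x hx)
  have hstarS : ∀ x y : E, c * ‖x‖ ^ 2 < 1 → c * ‖y‖ ^ 2 < 1 →
      ‖S x - S y‖ ^ 2 * ((1 - c * ‖x‖ ^ 2) * (1 - c * ‖y‖ ^ 2)) =
        ‖x - y‖ ^ 2 * ((1 - c * ‖S x‖ ^ 2) * (1 - c * ‖S y‖ ^ 2)) := by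
    intro x y hx hy
    have t1 := trans_inv hc hnb (hmaps x hx) (hmaps y hy)
    have s1 := star x y hx hy
    have hPx' : (0:ℝ) < 1 - c * ‖R x‖ ^ 2 := by have := hmaps x hx; linarith
    have hPy' : (0:ℝ) < 1 - c * ‖R y‖ ^ 2 := by have := hmaps y hy; linarith
    simp only [hS]
    refine mul_right_cancel₀ (mul_pos hPx' hPy').ne' ?_
    linear_combination
      ((1 - c * ‖mobiusAdd c (-(R 0)) (R x)‖ ^ 2) *
        (1 - c * ‖mobiusAdd c (-(R 0)) (R y)‖ ^ 2)) * s1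
      + ((1 - c * ‖x‖ ^ 2) * (1 - c * ‖y‖ ^ 2)) * t1
  have hS0 : S 0 = 0 := mobiusAdd_neg_self (R 0)
  have hnormSq : ∀ x : E, c * ‖x‖ ^ 2 < 1 → ‖S x‖ ^ 2 = ‖x‖ ^ 2 := by
    intro x hx
    have h := hstarS x 0 hx h0
    rw [hS0, sub_zero, sub_zero, norm_zero] at h
    simp only [ne_eq, OfNat.ofNat_ne_zero, not_false_eq_true, zero_pow, mul_zero, sub_zero,
      mul_one] at h
    linear_combination h
  have hnormS : ∀ x : E, c * ‖x‖ ^ 2 < 1 → ‖S x‖ = ‖x‖ := by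
    intro x hx
    rw [← Real.sqrt_sq (norm_nonneg (S x)), hnormSq x hx, Real.sqrt_sq (norm_nonneg x)]
  have hdistSq : ∀ x y : E, c * ‖x‖ ^ 2 < 1 → c * ‖y‖ ^ 2 < 1 →
      ‖S x - S y‖ ^ 2 = ‖x - y‖ ^ 2 := by
    intro x y hx hy
    have h := hstarS x y hx hy
    rw [hnormSq x hx, hnormSq y hy] at h
    have hP : ((1 - c * ‖x‖ ^ 2) * (1 - c * ‖y‖ ^ 2)) ≠ 0 := by
      have h1 : (0:ℝ) < 1 - c * ‖x‖ ^ 2 := by linarith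
      have h2 : (0:ℝ) < 1 - c * ‖y‖ ^ 2 := by linarith
      positivity
    exact mul_right_cancel₀ hP h
  have hinnerS : ∀ x y : E, c * ‖x‖ ^ 2 < 1 → c * ‖y‖ ^ 2 < 1 →
      ⟪S x, S y⟫ = ⟪x, y⟫ := by
    intro x y hx hy
    have h1 := norm_sub_sq_real (S x) (S y)
    have h2 := norm_sub_sq_real x y
    have h3 := hdistSq x y hx hy
    have h4 := hnormSq x hx
    have h5 := hnormSq y hy
    linarith
  -- Step 4: build the linear isometry W
  set bas := stdOrthonormalBasis ℝ E with hbas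
  set ε : ℝ := (2 * Real.sqrt c)⁻¹ with hε'
  have hε : 0 < ε := by positivity
  have h2s : (2 * Real.sqrt c) ^ 2 = 4 * c := by
    rw [mul_pow, Real.sq_sqrt hc.le]; norm_num
  have h4 : c * ε ^ 2 = 1 / 4 := by
    rw [hε', inv_pow, h2s]
    field_simp
  have hballe : ∀ w : E, ‖w‖ = 1 → c * ‖ε • w‖ ^ 2 < 1 := by
    intro w hw
    rw [norm_smul, Real.norm_eq_abs, abs_of_pos hε, hw, mul_one, h4]
    norm_num
  have hballi : ∀ i, c * ‖ε • bas i‖ ^ 2 < 1 := fun i =>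
    hballe (bas i) (bas.orthonormal.1 i)
  set v : Fin (Module.finrank ℝ E) → E := fun i => ε⁻¹ • S (ε • bas i) with hv
  have hvinner : ∀ (i) (x : E), c * ‖x‖ ^ 2 < 1 → ⟪v i, S x⟫ = ⟪bas i, x⟫ := by
    intro i x hx
    simp only [hv]
    rw [real_inner_smul_left, hinnerS (ε • bas i) x (hballi i) hx, real_inner_smul_left]
    field_simp
  have hvon : Orthonormal ℝ v := by
    rw [orthonormal_iff_ite]
    intro i j
    have h1 : ⟪v i, v j⟫ = ⟪bas i, bas j⟫ := by
      simp only [hv]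
      rw [real_inner_smul_left, real_inner_smul_right,
        hinnerS (ε • bas i) (ε • bas j) (hballi i) (hballi j),
        real_inner_smul_left, real_inner_smul_right]
      field_simp
    rw [h1]
    exact orthonormal_iff_ite.mp bas.orthonormal i j
  have hsp : Submodule.span ℝ (Set.range v) = ⊤ :=
    hvon.linearIndependent.span_eq_top_of_card_eq_finrank' (Fintype.card_fin _)
  set bas' : OrthonormalBasis (Fin (Module.finrank ℝ E)) ℝ E :=
    OrthonormalBasis.mk hvon hsp.ge with hbas'
  have hbas'c : ∀ i, bas' i = v i := by
    intro i
    rw [hbas', OrthonormalBasis.coe_mk]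
  set W : E →ₗᵢ[ℝ] E := (bas.repr.trans bas'.repr.symm).toLinearIsometry with hW'
  have hWb : ∀ i, W (bas i) = v i := by
    intro i
    simp only [hW', LinearIsometryEquiv.coe_toLinearIsometry, LinearIsometryEquiv.trans_apply]
    rw [OrthonormalBasis.repr_self, OrthonormalBasis.repr_symm_single, hbas'c]
  have hWS : ∀ x : E, c * ‖x‖ ^ 2 < 1 → W x = S x := by
    intro x hx
    have hiWS : ⟪W x, S x⟫ = ‖x‖ ^ 2 := by
      have hsum := bas'.sum_inner_mul_inner (W x) (S x)
      have hterm : ∀ i, ⟪W x, bas' i⟫ * ⟪bas' i, S x⟫ = ⟪x, bas i⟫ * ⟪bas i, x⟫ := by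
        intro i
        rw [hbas'c, ← hWb i, W.inner_map_map, hWb i, hvinner i x hx]
      rw [← hsum, Finset.sum_congr rfl (fun i _ => hterm i), bas.sum_inner_mul_inner,
        real_inner_self_eq_norm_sq]
    have hz : ‖W x - S x‖ ^ 2 = 0 := by
      rw [norm_sub_sq_real, hiWS, W.norm_map, hnormS x hx]
      ring
    have hz2 : ‖W x - S x‖ = 0 := by
      have := sq_nonneg ‖W x - S x‖
      nlinarith [norm_nonneg (W x - S x)]
    exact sub_eq_zero.mp (norm_eq_zero.mp hz2)
  -- Step 5: conclude
  refine ⟨R 0, hb, W, ?_⟩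
  intro x hx
  rw [hWS x hx]
  have : S x = mobiusAdd c (-(R 0)) (R x) := rfl
  rw [this]
  have hcan := mobiusAdd_cancel hc hnb (hmaps x hx)
  rw [neg_neg] at hcan
  exact hcan.symm
end
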